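/- Power composition law for repetitions: for any TPG G, path expression p, and naturals n₁ ≤ m₁, n₂ ≤ m₂, ⟦p[n₁,m₁]/p[n₂,m₂]⟧_G = ⟦p[n₁+n₂, m₁+m₂]⟧_G. -/
import Mathlib


structure TPG (V E : Type) where
  Om : Set ℕ
  src : E → V
  tgt : E → V
  lab : V ⊕ E → String
  xi : V ⊕ E → ℕ → Bool
  sig : V ⊕ E → String → ℕ → Option String

abbrev TObj (V E : Type) := (V ⊕ E) × ℕ
abbrev TRel (V E : Type) := Set (TObj V E × TObj V E)

variable {V E : Type}

/-- PTO(G): pairs of temporal objects whose time points belong to Ω. -/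
def TPG.PTO (G : TPG V E) : TRel V E := {x | x.1.2 ∈ G.Om ∧ x.2.2 ∈ G.Om}

/-- Relational composition (concatenation of path semantics). -/
def compR (R S : TRel V E) : TRel V E := {x | ∃ m, (x.1, m) ∈ R ∧ (m, x.2) ∈ S}

/-- Identity relation on temporal objects of G. -/
def TPG.IdR (G : TPG V E) : TRel V E := {x | x.1 = x.2 ∧ x.1.2 ∈ G.Om}

/-- k-fold composition, with the identity on temporal objects as 0th power. -/
def powR (G : TPG V E) (R : TRel V E) : ℕ → TRel V E
  | 0 => G.IdR
  | k + 1 => compR (powR G R k) R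

/-- ⟦p[n,m]⟧ = union of powers between n and m. -/
def repR (G : TPG V E) (R : TRel V E) (n m : ℕ) : TRel V E := ⋃ k ∈ Set.Icc n m, powR G R k

/-- ⟦p[n,_]⟧ = union of powers at least n. -/
def repInfR (G : TPG V E) (R : TRel V E) (n : ℕ) : TRel V E := ⋃ k ∈ Set.Ici n, powR G R k

/-- Forward structural axis F. -/
def TPG.axF (G : TPG V E) : TRel V E :=
  {x | x ∈ G.PTO ∧ x.1.2 = x.2.2 ∧
    ((∃ v e, x.1.1 = Sum.inl v ∧ x.2.1 = Sum.inr e ∧ G.src e = v) ∨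
     (∃ e v, x.1.1 = Sum.inr e ∧ x.2.1 = Sum.inl v ∧ G.tgt e = v))}

/-- Backward structural axis B. -/
def TPG.axB (G : TPG V E) : TRel V E :=
  {x | x ∈ G.PTO ∧ x.1.2 = x.2.2 ∧
    ((∃ v e, x.1.1 = Sum.inl v ∧ x.2.1 = Sum.inr e ∧ G.tgt e = v) ∨
     (∃ e v, x.1.1 = Sum.inr e ∧ x.2.1 = Sum.inl v ∧ G.src e = v))}

/-- Temporal axis N (next time point). -/
def TPG.axN (G : TPG V E) : TRel V E :=
  {x | x ∈ G.PTO ∧ x.1.1 = x.2.1 ∧ x.2.2 = x.1.2 + 1}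

/-- Temporal axis P (previous time point). -/
def TPG.axP (G : TPG V E) : TRel V E :=
  {x | x ∈ G.PTO ∧ x.1.1 = x.2.1 ∧ x.1.2 = x.2.2 + 1}

mutual
/-- Path expressions of NavL[PC,NOI]. -/
inductive PathE (V E : Type) where
  | axF | axB | axN | axP
  | test (τ : TestE V E)
  | comp (p q : PathE V E)
  | disj (p q : PathE V E)
  | rep (p : PathE V E) (n m : ℕ)
  | repInf (p : PathE V E) (n : ℕ)

/-- Test expressions of NavL[PC,NOI]. -/
inductive TestE (V E : Type) where
  | isNode | isEdge
  | lab (l : String)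
  | prop (p v : String)
  | lt (k : ℕ)
  | ex
  | q (p : PathE V E)
  | or (a b : TestE V E)
  | and (a b : TestE V E)
  | not (a : TestE V E)
end

mutual
/-- Semantics ⟦path⟧_G as a relation on temporal objects. -/
def sem (G : TPG V E) : PathE V E → TRel V E
  | .axF => G.axF
  | .axB => G.axB
  | .axN => G.axN
  | .axP => G.axP
  | .test τ => {x | x.1 = x.2 ∧ x.1.2 ∈ G.Om ∧ sat G τ x.1}
  | .comp p q => compR (sem G p) (sem G q)
  | .disj p q => sem G p ∪ sem G q
  | .rep p n m => repR G (sem G p) n m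
  | .repInf p n => repInfR G (sem G p) n

/-- Satisfaction (o,t) ⊨ test. -/
def sat (G : TPG V E) : TestE V E → TObj V E → Prop
  | .isNode, x => ∃ v, x.1 = Sum.inl v
  | .isEdge, x => ∃ e, x.1 = Sum.inr e
  | .lab l, x => G.lab x.1 = l
  | .prop p v, x => G.sig x.1 p x.2 = some v
  | .lt k, x => x.2 < k
  | .ex, x => G.xi x.1 x.2 = true
  | .q p, x => ∃ y, (x, y) ∈ sem G p
  | .or a b, x => sat G a x ∨ sat G b x
  | .and a b, x => sat G a x ∧ sat G b x
  | .not a, x => ¬ sat G a x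
end

def goodR (G : TPG V E) (R : TRel V E) : Prop :=
  ∀ x ∈ R, x.1.2 ∈ G.Om ∧ x.2.2 ∈ G.Om

lemma goodR_compR {G : TPG V E} {R S : TRel V E} (hR : goodR G R) (hS : goodR G S) :
    goodR G (compR R S) := by
  rintro x ⟨m, h1, h2⟩
  exact ⟨(hR _ h1).1, (hS _ h2).2⟩

lemma goodR_powR {G : TPG V E} {R : TRel V E} (h : goodR G R) :
    ∀ k, goodR G (powR G R k)
  | 0 => by rintro x ⟨he, hm⟩; exact ⟨hm, he ▸ hm⟩
  | k + 1 => goodR_compR (goodR_powR h k) h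

theorem sem_good (G : TPG V E) : (p : PathE V E) → goodR G (sem G p)
  | .axF => by intro x hx; exact hx.1
  | .axB => by intro x hx; exact hx.1
  | .axN => by intro x hx; exact hx.1
  | .axP => by intro x hx; exact hx.1
  | .test τ => by intro x hx; exact ⟨hx.2.1, hx.1 ▸ hx.2.1⟩
  | .comp p q => by
      intro x hx
      exact goodR_compR (sem_good G p) (sem_good G q) x hx
  | .disj p q => by
      intro x hx
      cases hx with
      | inl h => exact sem_good G p x h
      | inr h => exact sem_good G q x h
  | .rep p n m => by
      intro x hx
      simp only [sem, repR, Set.mem_iUnion] at hx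
      obtain ⟨k, _, hk⟩ := hx
      exact goodR_powR (sem_good G p) k x hk
  | .repInf p n => by
      intro x hx
      simp only [sem, repInfR, Set.mem_iUnion] at hx
      obtain ⟨k, _, hk⟩ := hx
      exact goodR_powR (sem_good G p) k x hk

lemma compR_assoc (R S T : TRel V E) : compR (compR R S) T = compR R (compR S T) := by
  ext x
  constructor
  · rintro ⟨m, ⟨m', h1, h2⟩, h3⟩; exact ⟨m', h1, m, h2, h3⟩
  · rintro ⟨m, h1, m', h2, h3⟩; exact ⟨m', ⟨m, h1, h2⟩, h3⟩

lemma compR_IdR_right {G : TPG V E} {R : TRel V E} (h : goodR G R) :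
    compR R G.IdR = R := by
  ext x
  constructor
  · rintro ⟨m, h1, h2, _⟩
    have : m = x.2 := h2
    rw [this] at h1
    exact h1
  · intro hx
    exact ⟨x.2, hx, rfl, (h x hx).2⟩

lemma powR_add {G : TPG V E} {R : TRel V E} (h : goodR G R) (a : ℕ) :
    ∀ b, compR (powR G R a) (powR G R b) = powR G R (a + b)
  | 0 => compR_IdR_right (goodR_powR h a)
  | b + 1 => by
      show compR (powR G R a) (compR (powR G R b) R) = _
      rw [← compR_assoc, powR_add h a b]
      rfl

/-- power composition law for repetitions. -/
theorem rep_comp_add (V E : Type) (G : TPG V E) (p : PathE V E) (n₁ m₁ n₂ m₂ : ℕ)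
    (h₁ : n₁ ≤ m₁) (h₂ : n₂ ≤ m₂) :
    sem G (.comp (.rep p n₁ m₁) (.rep p n₂ m₂)) = sem G (.rep p (n₁ + n₂) (m₁ + m₂)) := by
  have hg : goodR G (sem G p) := sem_good G p
  show compR (repR G (sem G p) n₁ m₁) (repR G (sem G p) n₂ m₂)
      = repR G (sem G p) (n₁ + n₂) (m₁ + m₂)
  ext x
  constructor
  · rintro ⟨m, hm1, hm2⟩
    simp only [repR, Set.mem_iUnion, Set.mem_Icc] at hm1 hm2 ⊢
    obtain ⟨k₁, ⟨hk₁n, hk₁m⟩, h1⟩ := hm1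
    obtain ⟨k₂, ⟨hk₂n, hk₂m⟩, h2⟩ := hm2
    refine ⟨k₁ + k₂, ⟨by omega, by omega⟩, ?_⟩
    rw [← powR_add hg]
    exact ⟨m, h1, h2⟩
  · intro hx
    simp only [repR, Set.mem_iUnion, Set.mem_Icc] at hx
    obtain ⟨k, ⟨hkn, hkm⟩, hk⟩ := hx
    set k₁ := min m₁ (k - n₂) with hk₁def
    set k₂ := k - k₁ with hk₂def
    have hsum : k₁ + k₂ = k := by omega
    rw [← hsum, ← powR_add hg] at hk
    obtain ⟨m, h1, h2⟩ := hk
    refine ⟨m, ?_, ?_⟩ <;> simp only [repR, Set.mem_iUnion, Set.mem_Icc]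
    · exact ⟨k₁, ⟨by omega, by omega⟩, h1⟩
    · exact ⟨k₂, ⟨by omega, by omega⟩, h2⟩
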